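/- Let $w : [0,T]\times[0,X]\times[0,1] \to \mathbb{R}$ be $C^2$ and satisfy $-\partial_\tau w - \eta\,\partial_\xi w + w^2 \partial_\eta^2 w = 0$ on the interior $D=(0,T]\times(0,X]\times(0,1)$. Fix constants $C_0>0$ and $0<\mu<1/100$, and define $g(\tau,\xi,\eta) = C_0(1-\eta)\sqrt{-\ln(\mu(1-\eta))} - w + \varepsilon\tau$ for $\varepsilon>0$. Then at any interior point of $D$, $L_0 g := -\partial_\tau g - \eta\,\partial_\xi g + w^2 \partial_\eta^2 g \le -\varepsilon < 0$. -/

import Mathlib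

open Real Set

theorem stmt_0
    (T X C0 μ ε : ℝ) (hT : 0 < T) (hX : 0 < X) (hC0 : 0 < C0)
    (hμ : 0 < μ) (hμ' : μ < 1/100) (hε : 0 < ε)
    (w : ℝ → ℝ → ℝ → ℝ)
    (hw : ContDiff ℝ 2 (fun p : ℝ × ℝ × ℝ => w p.1 p.2.1 p.2.2))
    (hPDE : ∀ τ ξ η, τ ∈ Set.Ioc 0 T → ξ ∈ Set.Ioc 0 X → η ∈ Set.Ioo 0 1 →
      -(deriv (fun t => w t ξ η) τ) - η * deriv (fun x => w τ x η) ξ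
        + (w τ ξ η) ^ 2 * deriv (deriv (fun e => w τ ξ e)) η = 0)
    (g : ℝ → ℝ → ℝ → ℝ)
    (hg : g = fun τ ξ η =>
      C0 * (1 - η) * Real.sqrt (-Real.log (μ * (1 - η))) - w τ ξ η + ε * τ) :
    ∀ τ ξ η, τ ∈ Set.Ioc 0 T → ξ ∈ Set.Ioc 0 X → η ∈ Set.Ioo 0 1 →
      -(deriv (fun t => g t ξ η) τ) - η * deriv (fun x => g τ x η) ξ
        + (w τ ξ η) ^ 2 * deriv (deriv (fun e => g τ ξ e)) η ≤ -ε ∧ -ε < 0 := by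
  subst hg
  intro τ ξ η hτm hξm hηm
  obtain ⟨hη0, hη1⟩ := hηm
  -- differentiability of w
  have hwd : Differentiable ℝ (fun p : ℝ × ℝ × ℝ => w p.1 p.2.1 p.2.2) :=
    hw.differentiable (by norm_num)
  have hτd : DifferentiableAt ℝ (fun t => w t ξ η) τ := by
    have : DifferentiableAt ℝ ((fun p : ℝ × ℝ × ℝ => w p.1 p.2.1 p.2.2) ∘
        (fun t => (t, ξ, η))) τ :=
      DifferentiableAt.comp _ (hwd _) (differentiableAt_id.prodMk (differentiableAt_const _))
    exact this
  have hξd : DifferentiableAt ℝ (fun x => w τ x η) ξ := by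
    have : DifferentiableAt ℝ ((fun p : ℝ × ℝ × ℝ => w p.1 p.2.1 p.2.2) ∘
        (fun x => (τ, x, η))) ξ :=
      DifferentiableAt.comp _ (hwd _)
        ((differentiableAt_const _).prodMk (differentiableAt_id.prodMk (differentiableAt_const _)))
    exact this
  have hfC2 : ContDiff ℝ 2 (fun e => w τ ξ e) := by
    have : ContDiff ℝ 2 ((fun p : ℝ × ℝ × ℝ => w p.1 p.2.1 p.2.2) ∘ (fun e : ℝ => (τ, ξ, e))) :=
      hw.comp (contDiff_const.prodMk (contDiff_const.prodMk contDiff_id))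
    exact this
  have hfsplit : Differentiable ℝ (fun e => w τ ξ e) ∧
      ContDiff ℝ 1 (deriv (fun e => w τ ξ e)) := by
    rw [show (2 : WithTop ℕ∞) = 1 + 1 from rfl] at hfC2
    have := contDiff_succ_iff_deriv.mp hfC2
    exact ⟨this.1, this.2.2⟩
  have hfd : Differentiable ℝ (fun e => w τ ξ e) := hfsplit.1
  have hf'd : DifferentiableAt ℝ (deriv (fun e => w τ ξ e)) η :=
    (hfsplit.2.differentiable one_ne_zero) η
  -- auxiliary facts on (0,1)
  have key : ∀ e ∈ Ioo (0:ℝ) 1,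
      HasDerivAt (fun e => C0 * (1 - e) * Real.sqrt (-Real.log (μ * (1 - e))))
        (C0 * ((2 * Real.sqrt (-Real.log (μ * (1 - e))))⁻¹
          - Real.sqrt (-Real.log (μ * (1 - e))))) e := by
    intro e ⟨he0, he1⟩
    have h1e : (0:ℝ) < 1 - e := by linarith
    have pe : 0 < μ * (1 - e) := mul_pos hμ h1e
    have pe1 : μ * (1 - e) < 1 := by nlinarith
    have upos : 0 < -Real.log (μ * (1 - e)) := neg_pos.mpr (Real.log_neg pe pe1)
    have ψpos : 0 < Real.sqrt (-Real.log (μ * (1 - e))) := Real.sqrt_pos.mpr upos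
    have h1 : HasDerivAt (fun e : ℝ => μ * (1 - e)) (μ * (-1)) e :=
      (((hasDerivAt_id e).const_sub 1)).const_mul μ
    have h2 : HasDerivAt (fun e : ℝ => Real.log (μ * (1 - e))) (μ * (-1) / (μ * (1 - e))) e :=
      h1.log pe.ne'
    have h3 : HasDerivAt (fun e : ℝ => -Real.log (μ * (1 - e))) (1 / (1 - e)) e := by
      refine h2.neg.congr_deriv ?_
      field_simp
    have h4 : HasDerivAt (fun e : ℝ => Real.sqrt (-Real.log (μ * (1 - e))))
        ((1 / (1 - e)) / (2 * Real.sqrt (-Real.log (μ * (1 - e))))) e :=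
      h3.sqrt upos.ne'
    have h5 : HasDerivAt (fun e : ℝ => C0 * (1 - e)) (-C0) e := by
      simpa using ((hasDerivAt_id e).const_sub 1).const_mul C0
    have h6 := h5.mul h4
    refine h6.congr_deriv ?_
    field_simp
    ring
  -- the η-derivative function of g τ ξ ·
  have hFder : ∀ e ∈ Ioo (0:ℝ) 1,
      HasDerivAt (fun e => C0 * (1 - e) * Real.sqrt (-Real.log (μ * (1 - e))) - w τ ξ e + ε * τ)
        (C0 * ((2 * Real.sqrt (-Real.log (μ * (1 - e))))⁻¹
          - Real.sqrt (-Real.log (μ * (1 - e)))) - deriv (fun e => w τ ξ e) e) e := by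
    intro e he
    exact ((key e he).sub (hfd e).hasDerivAt).add_const (ε * τ)
  have hevent : deriv (fun e => C0 * (1 - e) * Real.sqrt (-Real.log (μ * (1 - e)))
        - w τ ξ e + ε * τ)
      =ᶠ[nhds η] fun e => C0 * ((2 * Real.sqrt (-Real.log (μ * (1 - e))))⁻¹
          - Real.sqrt (-Real.log (μ * (1 - e)))) - deriv (fun e => w τ ξ e) e := by
    filter_upwards [isOpen_Ioo.mem_nhds ⟨hη0, hη1⟩] with e he
    exact (hFder e he).deriv
  -- second derivative at η
  have h1η : (0:ℝ) < 1 - η := by linarith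
  have peη : 0 < μ * (1 - η) := mul_pos hμ h1η
  have pe1η : μ * (1 - η) < 1 := by nlinarith
  have uposη : 0 < -Real.log (μ * (1 - η)) := neg_pos.mpr (Real.log_neg peη pe1η)
  have ψposη : 0 < Real.sqrt (-Real.log (μ * (1 - η))) := Real.sqrt_pos.mpr uposη
  have hψη : HasDerivAt (fun e : ℝ => Real.sqrt (-Real.log (μ * (1 - e))))
      ((1 / (1 - η)) / (2 * Real.sqrt (-Real.log (μ * (1 - η))))) η := by
    have h1 : HasDerivAt (fun e : ℝ => μ * (1 - e)) (μ * (-1)) η :=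
      (((hasDerivAt_id η).const_sub 1)).const_mul μ
    have h3 : HasDerivAt (fun e : ℝ => -Real.log (μ * (1 - e))) (1 / (1 - η)) η := by
      refine (h1.log peη.ne').neg.congr_deriv ?_
      field_simp
    exact h3.sqrt uposη.ne'
  set s := Real.sqrt (-Real.log (μ * (1 - η))) with hs
  set s' := (1 / (1 - η)) / (2 * s) with hs'
  have hinv : HasDerivAt (fun e : ℝ => (2 * Real.sqrt (-Real.log (μ * (1 - e))))⁻¹)
      (-(2 * s') / (2 * s) ^ 2) η := by
    exact (hψη.const_mul 2).inv (by positivity)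
  have hAder : HasDerivAt (fun e => C0 * ((2 * Real.sqrt (-Real.log (μ * (1 - e))))⁻¹
        - Real.sqrt (-Real.log (μ * (1 - e)))))
      (C0 * (-(2 * s') / (2 * s) ^ 2 - s')) η := (hinv.sub hψη).const_mul C0
  have hD1 : deriv (fun e => C0 * ((2 * Real.sqrt (-Real.log (μ * (1 - e))))⁻¹
        - Real.sqrt (-Real.log (μ * (1 - e)))) - deriv (fun e => w τ ξ e) e) η
      = C0 * (-(2 * s') / (2 * s) ^ 2 - s') - deriv (deriv (fun e => w τ ξ e)) η :=
    (hAder.sub hf'd.hasDerivAt).deriv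
  have hsecond : deriv (deriv (fun e => C0 * (1 - e) * Real.sqrt (-Real.log (μ * (1 - e)))
        - w τ ξ e + ε * τ)) η
      = C0 * (-(2 * s') / (2 * s) ^ 2 - s') - deriv (deriv (fun e => w τ ξ e)) η := by
    rw [hevent.deriv_eq, hD1]
  -- first derivatives in τ and ξ
  have hτ' : deriv (fun t => C0 * (1 - η) * Real.sqrt (-Real.log (μ * (1 - η)))
        - w t ξ η + ε * t) τ = -(deriv (fun t => w t ξ η) τ) + ε := by
    have : HasDerivAt (fun t => C0 * (1 - η) * Real.sqrt (-Real.log (μ * (1 - η)))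
        - w t ξ η + ε * t) (-(deriv (fun t => w t ξ η) τ) + ε) τ := by
      have h1 := (hτd.hasDerivAt.const_sub
        (C0 * (1 - η) * Real.sqrt (-Real.log (μ * (1 - η)))))
      have h2 := (hasDerivAt_id τ).const_mul ε
      have h3 := h1.add h2
      simp only [mul_one] at h3
      exact h3
    exact this.deriv
  have hξ' : deriv (fun x => C0 * (1 - η) * Real.sqrt (-Real.log (μ * (1 - η)))
        - w τ x η + ε * τ) ξ = -(deriv (fun x => w τ x η) ξ) := by
    have : HasDerivAt (fun x => C0 * (1 - η) * Real.sqrt (-Real.log (μ * (1 - η)))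
        - w τ x η + ε * τ) (-(deriv (fun x => w τ x η) ξ)) ξ := by
      have h1 := (hξd.hasDerivAt.const_sub
        (C0 * (1 - η) * Real.sqrt (-Real.log (μ * (1 - η)))))
      simpa using h1.add_const (ε * τ)
    exact this.deriv
  -- assemble
  have hpde := hPDE τ ξ η hτm hξm ⟨hη0, hη1⟩
  have hs'pos : 0 < s' := by rw [hs']; positivity
  have hApos : C0 * (-(2 * s') / (2 * s) ^ 2 - s') ≤ 0 := by
    have h1 : 0 ≤ (2 * s') / (2 * s) ^ 2 := by positivity
    have hterm : -(2 * s') / (2 * s) ^ 2 - s' ≤ 0 := by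
      rw [neg_div]; linarith
    exact mul_nonpos_of_nonneg_of_nonpos hC0.le hterm
  have hw2A : (w τ ξ η) ^ 2 * (C0 * (-(2 * s') / (2 * s) ^ 2 - s')) ≤ 0 :=
    mul_nonpos_of_nonneg_of_nonpos (sq_nonneg _) hApos
  refine ⟨?_, by linarith⟩
  rw [hτ', hξ', hsecond]
  nlinarith [hw2A, hpde]
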